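/- arXiv:1111.5979 — 2 statements merged into one kernel-verified Lean document; each statement's English description precedes it below -/
import Mathlib

section
/- Let D be a finite set of points in ℝ² whose pairwise Euclidean distances are all at least 2, let L = lift(D), let B be the set of blocking points, and let P = L ∪ B. Suppose L and B are disjoint. Then a subset S ⊆ P is in convex position if and only if no point of S ∩ B lies in the convex hull of S ∩ L. -/
open RealInnerProductSpace


/-- The standard lifting map to the elliptic paraboloid: `(x₁, x₂) ↦ (x₁, x₂, x₁² + x₂²)`. -/
noncomputable def lift (x : EuclideanSpace ℝ (Fin 2)) : EuclideanSpace ℝ (Fin 3) :=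
  (WithLp.equiv 2 (Fin 3 → ℝ)).symm ![x 0, x 1, x 0 ^ 2 + x 1 ^ 2]

/-- The set of blocking points of `D`: midpoints `(lift c + lift c')/2` over all touching
pairs `c, c' ∈ D` (i.e. pairs with `dist c c' = 2`). -/
noncomputable def blockers (D : Set (EuclideanSpace ℝ (Fin 2))) :
    Set (EuclideanSpace ℝ (Fin 3)) :=
  {b | ∃ c ∈ D, ∃ c' ∈ D, dist c c' = 2 ∧ b = (1 / 2 : ℝ) • (lift c + lift c')}

noncomputable def vec3 (a b c : ℝ) : EuclideanSpace ℝ (Fin 3) :=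
  (WithLp.equiv 2 (Fin 3 → ℝ)).symm ![a, b, c]

lemma inner_vec3 (a b c : ℝ) (y : EuclideanSpace ℝ (Fin 3)) :
    ⟪vec3 a b c, y⟫ = a * y 0 + b * y 1 + c * y 2 := by
  simp [vec3, PiLp.inner_apply, Fin.sum_univ_succ]
  ring

lemma lift_apply0 (x : EuclideanSpace ℝ (Fin 2)) : lift x 0 = x 0 := by
  simp [lift]
lemma lift_apply1 (x : EuclideanSpace ℝ (Fin 2)) : lift x 1 = x 1 := by
  simp [lift]
lemma lift_apply2 (x : EuclideanSpace ℝ (Fin 2)) : lift x 2 = x 0 ^ 2 + x 1 ^ 2 := by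
  simp [lift]

lemma smul_add_apply (r : ℝ) (a b : EuclideanSpace ℝ (Fin 3)) (i : Fin 3) :
    (r • (a + b)) i = r * (a i + b i) := by
  simp [PiLp.smul_apply, PiLp.add_apply, mul_add]

lemma dist_sq (p q : EuclideanSpace ℝ (Fin 2)) :
    dist p q ^ 2 = (p 0 - q 0) ^ 2 + (p 1 - q 1) ^ 2 := by
  rw [EuclideanSpace.dist_eq, Real.sq_sqrt (by positivity)]
  simp [Fin.sum_univ_succ, Real.dist_eq, sq_abs]

lemma four_le {p q : EuclideanSpace ℝ (Fin 2)} (h : 2 ≤ dist p q) :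
    4 ≤ (p 0 - q 0) ^ 2 + (p 1 - q 1) ^ 2 := by
  have h2 := dist_sq p q
  nlinarith [dist_nonneg (x := p) (y := q)]

lemma four_eq {p q : EuclideanSpace ℝ (Fin 2)} (h : dist p q = 2) :
    (p 0 - q 0) ^ 2 + (p 1 - q 1) ^ 2 = 4 := by
  rw [← dist_sq, h]; norm_num

lemma eq3_of_coords {p q : EuclideanSpace ℝ (Fin 3)} (h0 : p 0 = q 0) (h1 : p 1 = q 1)
    (h2 : p 2 = q 2) : p = q := by
  ext i; fin_cases i <;> assumption

lemma face_lemma {E : Type*} [NormedAddCommGroup E] [InnerProductSpace ℝ E]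
    (u : E) (c : ℝ) (s : Set E) (x : E)
    (hx : x ∈ convexHull ℝ s) (hs : ∀ y ∈ s, 0 ≤ ⟪u, y⟫ + c)
    (hfx : ⟪u, x⟫ + c = 0) :
    x ∈ convexHull ℝ (s ∩ {y | ⟪u, y⟫ + c = 0}) := by
  rw [convexHull_eq] at hx
  obtain ⟨ι, t, w, z, hw0, hw1, hz, hcm⟩ := hx
  classical
  set t' := {i ∈ t | w i ≠ 0} with ht'
  have hw1' : ∑ i ∈ t', w i = 1 := by
    rw [ht', Finset.sum_filter_ne_zero]; exact hw1
  have hx' : x = ∑ i ∈ t', w i • z i := by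
    rw [← hcm, ← Finset.centerMass_filter_ne_zero (z := z)]
    rw [Finset.centerMass, hw1', inv_one, one_smul]
  have hinner : ⟪u, x⟫ = ∑ i ∈ t', w i * ⟪u, z i⟫ := by
    rw [hx', inner_sum]
    simp [real_inner_smul_right]
  have hsum : ∑ i ∈ t', w i * (⟪u, z i⟫ + c) = 0 := by
    have : ∑ i ∈ t', w i * (⟪u, z i⟫ + c)
        = (∑ i ∈ t', w i * ⟪u, z i⟫) + (∑ i ∈ t', w i) * c := by
      rw [Finset.sum_mul, ← Finset.sum_add_distrib]; exact Finset.sum_congr rfl (fun _ _ => by ring)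
    rw [this, hw1', ← hinner, one_mul, hfx]
  have hterm : ∀ i ∈ t', w i * (⟪u, z i⟫ + c) = 0 := by
    intro i hi
    refine (Finset.sum_eq_zero_iff_of_nonneg ?_).mp hsum i hi
    intro j hj
    have hjt : j ∈ t := (Finset.mem_filter.mp hj).1
    exact mul_nonneg (hw0 j hjt) (hs _ (hz j hjt))
  have hzmem : ∀ i ∈ t', z i ∈ s ∩ {y | ⟪u, y⟫ + c = 0} := by
    intro i hi
    obtain ⟨hit, hwi⟩ := Finset.mem_filter.mp hi
    refine ⟨hz i hit, ?_⟩
    rcases mul_eq_zero.mp (hterm i hi) with h | h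
    · exact absurd h hwi
    · exact h
  have hmem : t'.centerMass w z ∈ convexHull ℝ (s ∩ {y | ⟪u, y⟫ + c = 0}) := by
    refine Finset.centerMass_mem_convexHull t' ?_ (by rw [hw1']; norm_num) hzmem
    intro i hi; exact hw0 i (Finset.mem_filter.mp hi).1
  have hcm' : t'.centerMass w z = x := by
    rw [hx', Finset.centerMass, hw1']; simp
  rwa [hcm'] at hmem

set_option maxHeartbeats 1000000 in
/-- Let `D ⊆ ℝ²` be finite with pairwise distances at least `2`, let
`L = lift '' D`, `B` the blocking points, `P = L ∪ B`, and suppose `L` and `B` are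
disjoint. Then `S ⊆ P` is in convex position iff no point of `S ∩ B` lies in the convex
hull of `S ∩ L`. -/
theorem convexPosition_iff_no_blocker_in_hull (D : Set (EuclideanSpace ℝ (Fin 2)))
    (hD : D.Finite) (hsep : ∀ p ∈ D, ∀ q ∈ D, p ≠ q → 2 ≤ dist p q)
    (hdisj : Disjoint (lift '' D) (blockers D))
    (S : Set (EuclideanSpace ℝ (Fin 3))) (hS : S ⊆ lift '' D ∪ blockers D) :
    (∀ p ∈ S, p ∉ convexHull ℝ (S \ {p})) ↔
      ∀ b ∈ S ∩ blockers D, b ∉ convexHull ℝ (S ∩ lift '' D) := by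
  constructor
  · intro hconv b hb hbhull
    obtain ⟨hbS, hbB⟩ := hb
    have hbL : b ∉ lift '' D := fun h => Set.disjoint_left.mp hdisj h hbB
    refine hconv b hbS (convexHull_mono ?_ hbhull)
    rintro q ⟨hqS, hqL⟩
    exact ⟨hqS, fun he => hbL (Set.mem_singleton_iff.mp he ▸ hqL)⟩
  · intro hB p hpS hpHull
    rcases hS hpS with hpL | hpB
    · -- p is a lifted point
      obtain ⟨a, haD, rfl⟩ := hpL
      have hfp : ⟪vec3 (-(2 * a 0)) (-(2 * a 1)) 1, lift a⟫ + (a 0 ^ 2 + a 1 ^ 2) = 0 := by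
        rw [inner_vec3, lift_apply0, lift_apply1, lift_apply2]; ring
      have hstrict : ∀ y ∈ S \ {lift a},
          0 < ⟪vec3 (-(2 * a 0)) (-(2 * a 1)) 1, y⟫ + (a 0 ^ 2 + a 1 ^ 2) := by
        rintro y ⟨hyS, hyne⟩
        rcases hS hyS with ⟨c, hc, rfl⟩ | ⟨c₃, h3, c₄, h4, hd34, rfl⟩
        · have hca : c ≠ a := fun h => hyne (by rw [h]; exact Set.mem_singleton _)
          have h4le := four_le (hsep c hc a haD hca)
          rw [inner_vec3, lift_apply0, lift_apply1, lift_apply2]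
          nlinarith
        · rw [inner_vec3, smul_add_apply, smul_add_apply, smul_add_apply,
            lift_apply0, lift_apply0, lift_apply1, lift_apply1, lift_apply2, lift_apply2]
          by_cases hc3 : c₃ = a
          · subst hc3
            have h34 := four_eq hd34
            nlinarith
          · have h3a := four_le (hsep c₃ h3 a haD hc3)
            have := sq_nonneg (c₄ 0 - a 0)
            have := sq_nonneg (c₄ 1 - a 1)
            nlinarith
      have hface := face_lemma _ _ (S \ {lift a}) (lift a) hpHull
        (fun y hy => (hstrict y hy).le) hfp
      have hempty : (S \ {lift a}) ∩
          {y | ⟪vec3 (-(2 * a 0)) (-(2 * a 1)) 1, y⟫ + (a 0 ^ 2 + a 1 ^ 2) = 0} = ∅ := by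
        ext y
        simp only [Set.mem_inter_iff, Set.mem_setOf_eq, Set.mem_empty_iff_false, iff_false,
          not_and]
        intro hy
        exact (hstrict y hy).ne'
      rw [hempty, convexHull_empty] at hface
      exact hface
    · -- p is a blocker
      obtain ⟨c₁, hc₁, c₂, hc₂, hd12, rfl⟩ := hpB
      have h12 := four_eq hd12
      have hp0 : ((1 / 2 : ℝ) • (lift c₁ + lift c₂)) 0 = (c₁ 0 + c₂ 0) / 2 := by
        rw [smul_add_apply, lift_apply0, lift_apply0]; ring
      have hp1 : ((1 / 2 : ℝ) • (lift c₁ + lift c₂)) 1 = (c₁ 1 + c₂ 1) / 2 := by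
        rw [smul_add_apply, lift_apply1, lift_apply1]; ring
      have hp2 : ((1 / 2 : ℝ) • (lift c₁ + lift c₂)) 2
          = ((c₁ 0 + c₂ 0) / 2) ^ 2 + ((c₁ 1 + c₂ 1) / 2) ^ 2 + 1 := by
        rw [smul_add_apply, lift_apply2, lift_apply2]
        nlinarith [h12]
      have hfp : ⟪vec3 (-(2 * ((c₁ 0 + c₂ 0) / 2))) (-(2 * ((c₁ 1 + c₂ 1) / 2))) 1,
          (1 / 2 : ℝ) • (lift c₁ + lift c₂)⟫
          + (((c₁ 0 + c₂ 0) / 2) ^ 2 + ((c₁ 1 + c₂ 1) / 2) ^ 2 - 1) = 0 := by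
        rw [inner_vec3, hp0, hp1, hp2]; ring
      have hnn : ∀ y ∈ S \ {(1 / 2 : ℝ) • (lift c₁ + lift c₂)},
          0 ≤ ⟪vec3 (-(2 * ((c₁ 0 + c₂ 0) / 2))) (-(2 * ((c₁ 1 + c₂ 1) / 2))) 1, y⟫
            + (((c₁ 0 + c₂ 0) / 2) ^ 2 + ((c₁ 1 + c₂ 1) / 2) ^ 2 - 1) := by
        rintro y ⟨hyS, hyne⟩
        rcases hS hyS with ⟨c, hc, rfl⟩ | ⟨c₃, h3, c₄, h4, hd34, rfl⟩
        · rw [inner_vec3, lift_apply0, lift_apply1, lift_apply2]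
          by_cases e1 : c = c₁
          · subst e1; nlinarith
          by_cases e2 : c = c₂
          · subst e2; nlinarith
          · have ha := four_le (hsep c hc c₁ hc₁ e1)
            have hb' := four_le (hsep c hc c₂ hc₂ e2)
            nlinarith
        · have h34 := four_eq hd34
          rw [inner_vec3, smul_add_apply, smul_add_apply, smul_add_apply,
            lift_apply0, lift_apply0, lift_apply1, lift_apply1, lift_apply2, lift_apply2]
          nlinarith [sq_nonneg ((c₃ 0 + c₄ 0) / 2 - (c₁ 0 + c₂ 0) / 2),
            sq_nonneg ((c₃ 1 + c₄ 1) / 2 - (c₁ 1 + c₂ 1) / 2)]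
      have hface := face_lemma _ _ _ _ hpHull hnn hfp
      have hsub : (S \ {(1 / 2 : ℝ) • (lift c₁ + lift c₂)}) ∩
          {y | ⟪vec3 (-(2 * ((c₁ 0 + c₂ 0) / 2))) (-(2 * ((c₁ 1 + c₂ 1) / 2))) 1, y⟫
            + (((c₁ 0 + c₂ 0) / 2) ^ 2 + ((c₁ 1 + c₂ 1) / 2) ^ 2 - 1) = 0}
          ⊆ S ∩ lift '' D := by
        rintro y ⟨⟨hyS, hyne⟩, hy0⟩
        rcases hS hyS with hL | ⟨c₃, h3, c₄, h4, hd34, rfl⟩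
        · exact ⟨hyS, hL⟩
        · exfalso
          have h34 := four_eq hd34
          rw [Set.mem_setOf_eq, inner_vec3, smul_add_apply, smul_add_apply, smul_add_apply,
            lift_apply0, lift_apply0, lift_apply1, lift_apply1, lift_apply2, lift_apply2]
            at hy0
          have e0 : (c₃ 0 + c₄ 0) / 2 = (c₁ 0 + c₂ 0) / 2 := by
            nlinarith [sq_nonneg ((c₃ 0 + c₄ 0) / 2 - (c₁ 0 + c₂ 0) / 2),
              sq_nonneg ((c₃ 1 + c₄ 1) / 2 - (c₁ 1 + c₂ 1) / 2)]
          have e1 : (c₃ 1 + c₄ 1) / 2 = (c₁ 1 + c₂ 1) / 2 := by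
            nlinarith [sq_nonneg ((c₃ 0 + c₄ 0) / 2 - (c₁ 0 + c₂ 0) / 2),
              sq_nonneg ((c₃ 1 + c₄ 1) / 2 - (c₁ 1 + c₂ 1) / 2)]
          apply hyne
          refine Set.mem_singleton_iff.mpr (eq3_of_coords ?_ ?_ ?_)
          · rw [smul_add_apply, lift_apply0, lift_apply0, hp0]; linarith [e0]
          · rw [smul_add_apply, lift_apply1, lift_apply1, hp1]; linarith [e1]
          · rw [smul_add_apply, lift_apply2, lift_apply2, hp2]
            linear_combination hy0 + (c₁ 0 + c₂ 0) * e0 + (c₁ 1 + c₂ 1) * e1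
      exact hB _ ⟨hpS, ⟨c₁, hc₁, c₂, hc₂, hd12, rfl⟩⟩ (convexHull_mono hsub hface)
end

section
/- Let D be a finite set of points in ℝ² whose pairwise Euclidean distances are all at least 2, let L = lift(D), let B be the set of blocking points, and suppose L and B are disjoint; let m be a natural number with m ≥ 1. Then the following are equivalent: (1) for every convex set C ⊆ ℝ³ with |C ∩ L| ≥ m, the intersection C ∩ B is nonempty (i.e., B is a weak (m/|D|)-net for L with respect to convex sets); (2) D contains no independent set of size m. -/
lemma dist_sq_eq' (x y : EuclideanSpace ℝ (Fin 2)) :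
    dist x y ^ 2 = (x 0 - y 0)^2 + (x 1 - y 1)^2 := by
  rw [EuclideanSpace.dist_eq, Real.sq_sqrt (by positivity)]
  simp [Fin.sum_univ_two, Real.dist_eq, sq_abs]

lemma lift_injective : Function.Injective lift := by
  intro x y h
  have h0 : x 0 = y 0 := congrFun (congrArg (WithLp.equiv 2 (Fin 3 → ℝ)) h) 0
  have h1 : x 1 = y 1 := congrFun (congrArg (WithLp.equiv 2 (Fin 3 → ℝ)) h) 1
  ext i
  fin_cases i <;> assumption

/-- An auxiliary linear functional on `ℝ³`. -/
noncomputable def fLin (y0 y1 : ℝ) : EuclideanSpace ℝ (Fin 3) →ₗ[ℝ] ℝ where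
  toFun p := p 2 - 2*y0*p 0 - 2*y1*p 1
  map_add' p q := by simp only [PiLp.add_apply]; ring
  map_smul' r p := by simp only [PiLp.smul_apply, smul_eq_mul, RingHom.id_apply]; ring

lemma fLin_lift (y0 y1 : ℝ) (x : EuclideanSpace ℝ (Fin 2)) :
    fLin y0 y1 (lift x) = (x 0)^2 + (x 1)^2 - 2*y0*(x 0) - 2*y1*(x 1) := by
  show (x 0^2 + x 1^2) - 2*y0*(x 0) - 2*y1*(x 1) = _; ring

/-- Value of the functional at the blocking point of a touching pair. -/
lemma fLin_blocker (c c' : EuclideanSpace ℝ (Fin 2))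
    (h4 : (c 0 - c' 0)^2 + (c 1 - c' 1)^2 = 4) :
    fLin ((c 0 + c' 0)/2) ((c 1 + c' 1)/2) ((1/2 : ℝ) • (lift c + lift c')) =
      1 - (((c 0 + c' 0)/2)^2 + ((c 1 + c' 1)/2)^2) := by
  rw [map_smul, map_add, fLin_lift, fLin_lift, smul_eq_mul]
  nlinarith [h4]

/-- Lower bound of the functional on lifted points of `D`. -/
lemma hge_aux (c c' x : EuclideanSpace ℝ (Fin 2))
    (hcc' : (c 0 - c' 0)^2 + (c 1 - c' 1)^2 = 4)
    (h1 : x = c ∨ x = c' ∨ ((4:ℝ) ≤ (x 0 - c 0)^2 + (x 1 - c 1)^2 ∧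
      (4:ℝ) ≤ (x 0 - c' 0)^2 + (x 1 - c' 1)^2)) :
    1 - (((c 0 + c' 0)/2)^2 + ((c 1 + c' 1)/2)^2) ≤
      fLin ((c 0 + c' 0)/2) ((c 1 + c' 1)/2) (lift x) := by
  rw [fLin_lift]
  rcases h1 with rfl | rfl | ⟨e1, e2⟩
  · nlinarith [hcc']
  · nlinarith [hcc']
  · nlinarith [hcc', e1, e2]

/-- On the unit circle: equality case of the functional. -/
lemma circle_aux (y0 y1 : ℝ) (x : EuclideanSpace ℝ (Fin 2))
    (h : fLin y0 y1 (lift x) = 1 - (y0^2 + y1^2)) :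
    (x 0 - y0)^2 + (x 1 - y1)^2 = 1 := by
  rw [fLin_lift] at h
  nlinarith [h]

/-- Two points on a unit circle are at squared distance at most 4. -/
lemma two_support_aux (a0 a1 b0 b1 : ℝ) (h1 : a0^2 + a1^2 = 1) (h2 : b0^2 + b1^2 = 1)
    (h3 : 4 < (a0 - b0)^2 + (a1 - b1)^2) : False := by
  nlinarith [sq_nonneg (a0 + b0), sq_nonneg (a1 + b1)]

lemma dist_sq_ge (x y : EuclideanSpace ℝ (Fin 2)) (h : 2 ≤ dist x y) :
    (4:ℝ) ≤ (x 0 - y 0)^2 + (x 1 - y 1)^2 := by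
  rw [← dist_sq_eq']; nlinarith [dist_nonneg (x := x) (y := y)]

lemma dist_sq_gt (x y : EuclideanSpace ℝ (Fin 2)) (h : 2 < dist x y) :
    (4:ℝ) < (x 0 - y 0)^2 + (x 1 - y 1)^2 := by
  rw [← dist_sq_eq']; nlinarith [dist_nonneg (x := x) (y := y)]

/-- Let `D ⊆ ℝ²` be finite with pairwise distances at least `2`, let
`L = lift '' D`, `B` the blocking points, with `L` and `B` disjoint, and let `m ≥ 1`.
Then `B` is a weak `(m/|D|)`-net for `L` with respect to convex sets (every convex
`C ⊆ ℝ³` with `|C ∩ L| ≥ m` meets `B`) iff `D` contains no independent set of size `m`. -/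
theorem weak_net_iff_no_independent_set (D : Set (EuclideanSpace ℝ (Fin 2)))
    (hD : D.Finite) (hsep : ∀ p ∈ D, ∀ q ∈ D, p ≠ q → 2 ≤ dist p q)
    (hdisj : Disjoint (lift '' D) (blockers D)) (m : ℕ) (hm : 1 ≤ m) :
    (∀ C : Set (EuclideanSpace ℝ (Fin 3)), Convex ℝ C →
        m ≤ (C ∩ lift '' D).ncard → (C ∩ blockers D).Nonempty) ↔
      ¬ ∃ I ⊆ D, (∀ p ∈ I, ∀ q ∈ I, p ≠ q → 2 < dist p q) ∧ I.ncard = m := by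
  constructor
  · rintro hnet ⟨I, hID, hind, hcard⟩
    have hIfin : I.Finite := hD.subset hID
    have hLfin : (lift '' I).Finite := hIfin.image lift
    set s : Finset (EuclideanSpace ℝ (Fin 3)) := hLfin.toFinset with hs
    have hscoe : (s : Set (EuclideanSpace ℝ (Fin 3))) = lift '' I := hLfin.coe_toFinset
    -- the convex hull of the lifted independent set contains m points of L
    have hcount : m ≤ ((convexHull ℝ (s : Set (EuclideanSpace ℝ (Fin 3)))) ∩ lift '' D).ncard := by
      have hsub : (s : Set (EuclideanSpace ℝ (Fin 3))) ⊆
          (convexHull ℝ (s : Set (EuclideanSpace ℝ (Fin 3)))) ∩ lift '' D := by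
        intro p hp
        exact ⟨subset_convexHull ℝ _ hp, by
          rw [hscoe] at hp; exact Set.image_mono hID hp⟩
      have h1 : ((s : Set (EuclideanSpace ℝ (Fin 3)))).ncard = m := by
        rw [hscoe, Set.ncard_image_of_injective _ lift_injective, hcard]
      calc m = ((s : Set (EuclideanSpace ℝ (Fin 3)))).ncard := h1.symm
        _ ≤ _ := Set.ncard_le_ncard hsub (((hD.image lift).inter_of_right _))
    obtain ⟨b, hbC, hbB⟩ := hnet _ (convex_convexHull ℝ _) hcount
    obtain ⟨c, hc, c', hc', hdist, hbeq⟩ := hbB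
    rw [Finset.convexHull_eq] at hbC
    obtain ⟨w, hw0, hw1, hwb⟩ := hbC
    rw [Finset.centerMass_eq_of_sum_1 _ _ hw1] at hwb
    have hcc' : (c 0 - c' 0)^2 + (c 1 - c' 1)^2 = 4 := by
      have := dist_sq_eq' c c'
      rw [hdist] at this; linarith
    set y0 : ℝ := (c 0 + c' 0)/2 with hy0
    set y1 : ℝ := (c 1 + c' 1)/2 with hy1
    -- value of the functional at the blocker
    have hfb : fLin y0 y1 b = 1 - (y0^2 + y1^2) := by
      rw [hbeq]; exact fLin_blocker c c' hcc'
    -- lower bound on points of D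
    have hge : ∀ x ∈ D, 1 - (y0^2 + y1^2) ≤ fLin y0 y1 (lift x) := by
      intro x hx
      apply hge_aux c c' x hcc'
      rcases eq_or_ne x c with rfl | hxc
      · exact Or.inl rfl
      rcases eq_or_ne x c' with rfl | hxc'
      · exact Or.inr (Or.inl rfl)
      · exact Or.inr (Or.inr ⟨dist_sq_ge x c (hsep x hx c hc hxc),
          dist_sq_ge x c' (hsep x hx c' hc' hxc')⟩)
    have hgep : ∀ p ∈ s, 1 - (y0^2 + y1^2) ≤ fLin y0 y1 p := by
      intro p hp
      have : p ∈ lift '' I := by rw [← hscoe]; exact_mod_cast hp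
      obtain ⟨x, hxI, rfl⟩ := this
      exact hge x (hID hxI)
    -- the functional's value at b as a sum
    have hsum : ∑ p ∈ s, w p * fLin y0 y1 p = 1 - (y0^2 + y1^2) := by
      rw [← hfb, ← hwb, map_sum]
      simp [smul_eq_mul]
    have hzero : ∀ p ∈ s, w p * (fLin y0 y1 p - (1 - (y0^2 + y1^2))) = 0 := by
      have htot : ∑ p ∈ s, w p * (fLin y0 y1 p - (1 - (y0^2 + y1^2))) = 0 := by
        have expand : ∀ p ∈ s, w p * (fLin y0 y1 p - (1 - (y0^2 + y1^2))) =
            w p * fLin y0 y1 p - (1 - (y0^2 + y1^2)) * w p := fun p _ => by ring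
        rw [Finset.sum_congr rfl expand, Finset.sum_sub_distrib, hsum, ← Finset.mul_sum, hw1]
        ring
      intro p hp
      exact (Finset.sum_eq_zero_iff_of_nonneg (fun q hq =>
        mul_nonneg (hw0 q hq) (by linarith [hgep q hq]))).mp htot p hp
    have hcirc : ∀ p ∈ s, w p ≠ 0 → fLin y0 y1 p = 1 - (y0^2 + y1^2) := by
      intro p hp hwp
      rcases mul_eq_zero.mp (hzero p hp) with h | h
      · exact absurd h hwp
      · linarith
    obtain ⟨p₀, hp₀s, hwp₀⟩ : ∃ p ∈ s, w p ≠ 0 :=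
      Finset.exists_ne_zero_of_sum_ne_zero (by rw [hw1]; norm_num)
    by_cases hsing : ∃ q ∈ s, q ≠ p₀ ∧ w q ≠ 0
    · -- two distinct support points: contradiction with independence
      obtain ⟨q, hqs, hqp, hwq⟩ := hsing
      have hp' : p₀ ∈ lift '' I := by rw [← hscoe]; exact_mod_cast hp₀s
      have hq' : q ∈ lift '' I := by rw [← hscoe]; exact_mod_cast hqs
      obtain ⟨xp, hxp, rfl⟩ := hp'
      obtain ⟨xq, hxq, rfl⟩ := hq'
      have hxpq : xp ≠ xq := fun h => hqp (by rw [h])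
      have hd2 : (4:ℝ) < (xp 0 - xq 0)^2 + (xp 1 - xq 1)^2 :=
        dist_sq_gt xp xq (hind xp hxp xq hxq hxpq)
      have c1 : (xp 0 - y0)^2 + (xp 1 - y1)^2 = 1 := circle_aux y0 y1 xp (hcirc _ hp₀s hwp₀)
      have c2 : (xq 0 - y0)^2 + (xq 1 - y1)^2 = 1 := circle_aux y0 y1 xq (hcirc _ hqs hwq)
      exact two_support_aux (xp 0 - y0) (xp 1 - y1) (xq 0 - y0) (xq 1 - y1) c1 c2
        (by nlinarith [hd2])
    · -- single support point: b ∈ L ∩ B contradicts disjointness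
      push_neg at hsing
      have hwother : ∀ q ∈ s, q ≠ p₀ → w q = 0 := fun q hq hne => hsing q hq hne
      have hwp1 : w p₀ = 1 := by
        rw [← hw1, Finset.sum_eq_single p₀ (fun q hq hne => hwother q hq hne)
          (fun h => absurd hp₀s h)]
      have hbp : b = p₀ := by
        rw [← hwb, Finset.sum_eq_single p₀ (fun q hq hne => by rw [hwother q hq hne, zero_smul])
          (fun h => absurd hp₀s h), hwp1, one_smul]; rfl
      have hbL : b ∈ lift '' D := by
        rw [hbp]
        have : p₀ ∈ lift '' I := by rw [← hscoe]; exact_mod_cast hp₀s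
        exact Set.image_mono hID this
      exact Set.disjoint_left.mp hdisj hbL ⟨c, hc, c', hc', hdist, hbeq⟩
  · intro hno C hC hcount
    set S : Set (EuclideanSpace ℝ (Fin 2)) := {x ∈ D | lift x ∈ C} with hS
    have himg : lift '' S = C ∩ lift '' D := by
      ext p
      constructor
      · rintro ⟨x, ⟨hxD, hxC⟩, rfl⟩
        exact ⟨hxC, ⟨x, hxD, rfl⟩⟩
      · rintro ⟨hpC, x, hxD, rfl⟩
        exact ⟨x, ⟨hxD, hpC⟩, rfl⟩
    have hScard : m ≤ S.ncard := by
      rw [← Set.ncard_image_of_injective S lift_injective, himg]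
      exact hcount
    obtain ⟨T, hTS, hTcard⟩ := Set.exists_subset_card_eq hScard
    have hTD : T ⊆ D := fun x hx => (hTS hx).1
    have hnotind : ¬(∀ p ∈ T, ∀ q ∈ T, p ≠ q → 2 < dist p q) := fun h =>
      hno ⟨T, hTD, h, hTcard⟩
    push_neg at hnotind
    obtain ⟨p, hp, q, hq, hpq, hd⟩ := hnotind
    have hd2 : dist p q = 2 := le_antisymm hd (hsep p (hTD hp) q (hTD hq) hpq)
    refine ⟨(1/2 : ℝ) • (lift p + lift q), ?_, ⟨p, hTD hp, q, hTD hq, hd2, rfl⟩⟩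
    have h1 : lift p ∈ C := (hTS hp).2
    have h2 : lift q ∈ C := (hTS hq).2
    have hmem := hC h1 h2 (by norm_num : (0:ℝ) ≤ 1/2) (by norm_num : (0:ℝ) ≤ 1/2)
      (by norm_num : (1/2 : ℝ) + 1/2 = 1)
    rw [smul_add]
    exact hmem
end
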